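/- The function G₂(θ) = 1 - 4α·cos²θ - 4α²·sin²θ·cos²θ is strictly positive for all θ ∈ [0, π] if and only if -2 < α < 1/4 (for α ≠ 0; for α = 0 it is identically 1). -/

import Mathlib

open Real Set

/-- `G₂(θ) = 1 - 4α cos²θ - 4α² sin²θ cos²θ` is strictly positive on `[0, π]`
if and only if `-2 < α < 1/4`. -/
theorem quadrupole_positivity (α : ℝ) :
    (∀ θ ∈ Set.Icc (0 : ℝ) π,
        1 - 4 * α * (cos θ) ^ 2 - 4 * α ^ 2 * (sin θ) ^ 2 * (cos θ) ^ 2 > 0)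
      ↔ (-2 < α ∧ α < 1 / 4) := by
  constructor
  · intro H
    have h0 := H 0 ⟨le_refl 0, Real.pi_pos.le⟩
    simp [Real.cos_zero, Real.sin_zero] at h0
    refine ⟨?_, by linarith⟩
    by_contra hle
    push_neg at hle
    have hαneg : α < 0 := by linarith
    have hαne : (2 : ℝ) * α ≠ 0 := by intro h; nlinarith
    set t : ℝ := (1 + α) / (2 * α) with ht
    have key : 2 * α * t = 1 + α := by
      rw [ht]; field_simp; exact mul_div_cancel_left₀ _ hαneg.ne
    have ht0 : 0 ≤ t := by
      rw [ht, div_nonneg_iff]; right; constructor <;> linarith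
    have ht1 : t ≤ 1 := by
      rw [ht, div_le_one_of_neg (by linarith)]
      linarith
    have hx1 : Real.sqrt t ≤ 1 := by
      rw [show (1:ℝ) = Real.sqrt 1 by simp]
      exact Real.sqrt_le_sqrt ht1
    have hθ := H (Real.arccos (Real.sqrt t))
      ⟨Real.arccos_nonneg _, Real.arccos_le_pi _⟩
    rw [Real.sin_sq (Real.arccos (Real.sqrt t))] at hθ
    rw [Real.cos_arccos (by linarith [Real.sqrt_nonneg t]) hx1] at hθ
    rw [Real.sq_sqrt ht0] at hθ
    have h4 : (2 * α * t) ^ 2 = (1 + α) ^ 2 := by rw [key]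
    nlinarith [hθ, key, h4, sq_nonneg (1 + α)]
  · rintro ⟨h1, h2⟩ θ _
    have hs : Real.sin θ ^ 2 = 1 - Real.cos θ ^ 2 := Real.sin_sq θ
    have hc1 : Real.cos θ ^ 2 ≤ 1 := Real.cos_sq_le_one θ
    have hc0 : 0 ≤ Real.cos θ ^ 2 := sq_nonneg _
    rw [hs]
    rcases lt_trichotomy α 0 with hα | hα | hα
    · nlinarith [sq_nonneg (2 * α * Real.cos θ ^ 2 - (1 + α)),
        mul_pos (neg_pos.2 hα) (by linarith : (0:ℝ) < 2 + α)]
    · simp [hα]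
    · nlinarith [mul_nonneg (mul_nonneg hα.le (by linarith : (0:ℝ) ≤ 1 - Real.cos θ ^ 2))
        (by nlinarith : (0:ℝ) ≤ 1 - α * Real.cos θ ^ 2)]
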